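/- arXiv:2103.13068 — 3 statements merged into one kernel-verified Lean document; each statement's English description precedes it below -/
import Mathlib

section
/- Let ζ ∈ ℂ, let Λ = {σ₁,…,σₖ} ⊂ ℂ be pairwise distinct nodes and Ξ = {ξ₁,…,ξₖ} ⊂ ℂ poles disjoint from Λ ∪ {−ζ}, and let r(λ) = p(λ)/q(λ) with q(λ) = ∏ⱼ (λ−ξⱼ) be the unique rational function of type (k−1,k) interpolating f(λ) = 1/(ζ+λ) at Λ. Then for all λ ∉ Ξ ∪ {−ζ}: 1/(ζ+λ) − r(λ) = (1/(ζ+λ)) · (∏ⱼ (λ−σⱼ)/(λ−ξⱼ)) / (∏ⱼ (−ζ−σⱼ)/(−ζ−ξⱼ)). -/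
open Finset Polynomial

/-- Hermite-Walsh type identity for the resolvent kernel: if `r = p/q` with
`q(λ) = ∏ⱼ (λ - ξⱼ)` is the rational function of type `(k-1,k)` interpolating
`f(λ) = 1/(ζ+λ)` at the pairwise distinct nodes `σ₁,…,σₖ`, then for all
`λ ∉ Ξ ∪ {-ζ}`:
`1/(ζ+λ) - r(λ) = (1/(ζ+λ)) · (∏ⱼ (λ-σⱼ)/(λ-ξⱼ)) / (∏ⱼ (-ζ-σⱼ)/(-ζ-ξⱼ))`. -/
theorem hermiteWalsh_resolvent (k : ℕ) (hk : 0 < k) (ζ : ℂ)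
    (σ ξ : Fin k → ℂ) (hσ : Function.Injective σ)
    (hσζ : ∀ j, σ j ≠ -ζ) (hξσ : ∀ i j, ξ i ≠ σ j) (hξζ : ∀ i, ξ i ≠ -ζ)
    (p : Polynomial ℂ) (hp : p.degree < k)
    (hinterp : ∀ j, p.eval (σ j) / (∏ i, (σ j - ξ i)) = 1 / (ζ + σ j)) :
    ∀ l : ℂ, (∀ i, l ≠ ξ i) → l ≠ -ζ →
      1 / (ζ + l) - p.eval l / (∏ i, (l - ξ i)) =
        (1 / (ζ + l)) * ((∏ j, (l - σ j) / (l - ξ j)) /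
          (∏ j, (-ζ - σ j) / (-ζ - ξ j))) := by
  classical
  set q : Polynomial ℂ := ∏ i, (X - C (ξ i)) with hq
  set s : Polynomial ℂ := ∏ j, (X - C (σ j)) with hs
  have hqe : ∀ x : ℂ, q.eval x = ∏ i, (x - ξ i) := by
    intro x; simp [hq, eval_prod]
  have hse : ∀ x : ℂ, s.eval x = ∏ j, (x - σ j) := by
    intro x; simp [hs, eval_prod]
  have hsz : s.eval (-ζ) ≠ 0 := by
    rw [hse]
    exact prod_ne_zero_iff.2 fun j _ => sub_ne_zero.2 fun h => hσζ j h.symm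
  have hqz : q.eval (-ζ) ≠ 0 := by
    rw [hqe]
    exact prod_ne_zero_iff.2 fun i _ => sub_ne_zero.2 fun h => hξζ i h.symm
  set c : ℂ := q.eval (-ζ) / s.eval (-ζ) with hc
  set D : Polynomial ℂ := q - (C ζ + X) * p - C c * s with hD
  -- degree bounds
  have hdq : q.degree ≤ (k : WithBot ℕ) := by
    refine (degree_prod_le _ _).trans ?_
    simp [degree_X_sub_C]
  have hds : s.degree ≤ (k : WithBot ℕ) := by
    refine (degree_prod_le _ _).trans ?_
    simp [degree_X_sub_C]
  have hdp : ((C ζ + X) * p).degree ≤ (k : WithBot ℕ) := by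
    rcases eq_or_ne p 0 with rfl | hpne
    · simp
    · refine (degree_mul_le _ _).trans ?_
      have h1 : (C ζ + X).degree = 1 := by
        rw [add_comm]; exact degree_X_add_C ζ
      rw [h1]
      have : p.degree + 1 ≤ k := by
        rw [degree_eq_natDegree hpne] at hp ⊢
        exact_mod_cast Nat.succ_le_of_lt (by exact_mod_cast hp)
      rwa [add_comm]
  have hdD : D.degree ≤ (k : WithBot ℕ) := by
    refine (degree_sub_le _ _).trans (max_le ((degree_sub_le _ _).trans (max_le hdq hdp)) ?_)
    exact (degree_mul_le _ _).trans (by simpa using (add_le_add degree_C_le hds).trans (by simp))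
  -- evaluations
  have hevσ : ∀ j, D.eval (σ j) = 0 := by
    intro j
    have hqσ : (∏ i, (σ j - ξ i)) ≠ 0 :=
      prod_ne_zero_iff.2 fun i _ => sub_ne_zero.2 fun h => hξσ i j h.symm
    have hζσ : ζ + σ j ≠ 0 := fun h => hσζ j (by linear_combination h)
    have hkey : p.eval (σ j) * (ζ + σ j) = ∏ i, (σ j - ξ i) := by
      have := (div_eq_div_iff hqσ hζσ).1 (hinterp j)
      linear_combination this
    have hsσ : s.eval (σ j) = 0 := by
      rw [hse]; exact prod_eq_zero (mem_univ j) (by ring)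
    simp only [hD, eval_sub, eval_mul, eval_add, eval_C, eval_X, hsσ, mul_zero, hqe]
    rw [← hkey]; ring
  have hevζ : D.eval (-ζ) = 0 := by
    have hpζ : ((C ζ + X) * p).eval (-ζ) = 0 := by simp
    simp only [hD, eval_sub, eval_mul, eval_C, hpζ, hc]
    field_simp
    ring
  -- D = 0
  have hD0 : D = 0 := by
    apply eq_zero_of_natDegree_lt_card_of_eval_eq_zero D
      (f := (Fin.cons (-ζ) σ : Fin (k + 1) → ℂ))
    · intro a b hab
      rcases Fin.eq_zero_or_eq_succ a with rfl | ⟨i, rfl⟩ <;>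
        rcases Fin.eq_zero_or_eq_succ b with rfl | ⟨j, rfl⟩ <;>
        simp only [Fin.cons_zero, Fin.cons_succ] at hab
      · rfl
      · exact absurd hab.symm (hσζ j)
      · exact absurd hab (hσζ i)
      · exact congrArg Fin.succ (hσ hab)
    · intro i
      refine Fin.cases ?_ ?_ i
      · simpa using hevζ
      · intro j; simpa using hevσ j
    · have : D.natDegree ≤ k := natDegree_le_iff_degree_le.2 hdD
      simpa using Nat.lt_succ_of_le this
  -- key identity at l
  intro l hlξ hlζ
  have hql : (∏ i, (l - ξ i)) ≠ 0 :=
    prod_ne_zero_iff.2 fun i _ => sub_ne_zero.2 (hlξ i)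
  have hζl : ζ + l ≠ 0 := fun h => hlζ (by linear_combination h)
  have hkey : (∏ i, (l - ξ i)) - (ζ + l) * p.eval l = c * ∏ j, (l - σ j) := by
    have := congrArg (Polynomial.eval l) hD0
    simp only [hD, eval_sub, eval_mul, eval_add, eval_C, eval_X, eval_zero, hqe, hse] at this
    linear_combination this
  have hsζ' : (∏ j, (-ζ - σ j)) ≠ 0 := by rw [← hse]; exact hsz
  have hqζ' : (∏ i, (-ζ - ξ i)) ≠ 0 := by rw [← hqe]; exact hqz
  rw [prod_div_distrib, prod_div_distrib]
  rw [hc, hse, hqe] at hkey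
  field_simp
  rw [div_mul_eq_mul_div, eq_div_iff hsζ'] at hkey
  linear_combination hkey
end

section
/- Let ζ ∈ ℂ \ {0}, Λ = {σ₁,…,σₖ} ⊂ ℂ\{0} pairwise distinct, Λ̂ = Λ ∪ {0}, Ξ = {ξ₁,…,ξₖ} ⊂ ℂ disjoint from Λ̂ ∪ {−ζ}, and let r̂ be the unique rational function of type (k,k) with denominator ∏ⱼ(λ−ξⱼ) interpolating f(λ) = λ/(ζ+λ) at the k+1 points of Λ̂. Then λ/(ζ+λ) − r̂(λ) = (λ/(ζ+λ)) · r_{Λ,Ξ}(λ)/r_{Λ,Ξ}(−ζ), where r_{Λ,Ξ}(λ) = ∏ⱼ (λ−σⱼ)/(λ−ξⱼ). -/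
open Finset

/-- Hermite-Walsh type identity for the complete Bernstein kernel: let `ζ ≠ 0`,
`Λ = {σ₁,…,σₖ} ⊂ ℂ \ {0}` pairwise distinct, `Λ̂ = Λ ∪ {0}`, and let `r̂ = p/q` with
`q(λ) = ∏ⱼ (λ-ξⱼ)` be the rational function of type `(k,k)` interpolating
`f(λ) = λ/(ζ+λ)` at the `k+1` points of `Λ̂`. Then
`λ/(ζ+λ) - r̂(λ) = (λ/(ζ+λ)) · r_{Λ,Ξ}(λ)/r_{Λ,Ξ}(-ζ)` with
`r_{Λ,Ξ}(λ) = ∏ⱼ (λ-σⱼ)/(λ-ξⱼ)`. -/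
theorem hermiteWalsh_bernstein (k : ℕ) (hk : 0 < k) (ζ : ℂ) (hζ : ζ ≠ 0)
    (σ ξ : Fin k → ℂ) (hσ : Function.Injective σ) (hσ0 : ∀ j, σ j ≠ 0)
    (hσζ : ∀ j, σ j ≠ -ζ) (hξσ : ∀ i j, ξ i ≠ σ j) (hξ0 : ∀ i, ξ i ≠ 0)
    (hξζ : ∀ i, ξ i ≠ -ζ)
    (hrζ : (∏ j, (-ζ - σ j) / (-ζ - ξ j)) ≠ 0)
    (p : Polynomial ℂ) (hp : p.degree ≤ k)
    (hinterp0 : p.eval 0 / (∏ i, ((0 : ℂ) - ξ i)) = 0)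
    (hinterp : ∀ j, p.eval (σ j) / (∏ i, (σ j - ξ i)) = σ j / (ζ + σ j)) :
    ∀ l : ℂ, (∀ i, l ≠ ξ i) → l ≠ -ζ →
      l / (ζ + l) - p.eval l / (∏ i, (l - ξ i)) =
        (l / (ζ + l)) * ((∏ j, (l - σ j) / (l - ξ j)) /
          (∏ j, (-ζ - σ j) / (-ζ - ξ j))) := by
  classical
  have hQζ : (∏ j, (-ζ - ξ j)) ≠ 0 :=
    prod_ne_zero_iff.mpr fun j _ => sub_ne_zero_of_ne (Ne.symm (hξζ j))
  have hSζ : (∏ j, (-ζ - σ j)) ≠ 0 :=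
    prod_ne_zero_iff.mpr fun j _ => sub_ne_zero_of_ne (Ne.symm (hσζ j))
  set c : ℂ := (∏ j, (-ζ - ξ j)) / (∏ j, (-ζ - σ j)) with hc
  -- polynomials
  set q : Polynomial ℂ := ∏ j, (Polynomial.X - Polynomial.C (ξ j)) with hq
  set s : Polynomial ℂ := ∏ j, (Polynomial.X - Polynomial.C (σ j)) with hs
  set G : Polynomial ℂ :=
    Polynomial.X * q - (Polynomial.C ζ + Polynomial.X) * p
      - Polynomial.C c * (Polynomial.X * s) with hG
  have hqnd : q.natDegree ≤ k := by
    refine le_trans (Polynomial.natDegree_prod_le _ _) ?_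
    refine le_trans (Finset.sum_le_sum (g := fun _ => 1)
      fun j _ => Polynomial.natDegree_X_sub_C_le (ξ j)) ?_
    simp
  have hsnd : s.natDegree ≤ k := by
    refine le_trans (Polynomial.natDegree_prod_le _ _) ?_
    refine le_trans (Finset.sum_le_sum (g := fun _ => 1)
      fun j _ => Polynomial.natDegree_X_sub_C_le (σ j)) ?_
    simp
  have hpnd : p.natDegree ≤ k := Polynomial.natDegree_le_iff_degree_le.mpr hp
  have hGdeg : G.natDegree < k + 2 := by
    have h1 : (Polynomial.X * q).natDegree ≤ 1 + k :=
      le_trans (Polynomial.natDegree_mul_le) (by simpa using hqnd)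
    have h2 : ((Polynomial.C ζ + Polynomial.X) * p).natDegree ≤ 1 + k := by
      refine le_trans (Polynomial.natDegree_mul_le) ?_
      have : (Polynomial.C ζ + Polynomial.X).natDegree ≤ 1 := by
        refine le_trans (Polynomial.natDegree_add_le _ _) ?_
        simp [Polynomial.natDegree_X_le]
      omega
    have h3 : (Polynomial.C c * (Polynomial.X * s)).natDegree ≤ 1 + k := by
      refine le_trans (Polynomial.natDegree_mul_le) ?_
      have : (Polynomial.X * s).natDegree ≤ 1 + k :=
        le_trans (Polynomial.natDegree_mul_le) (by simpa using hsnd)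
      simpa using this
    have h4 : G.natDegree ≤ 1 + k := by
      rw [hG]
      exact le_trans (Polynomial.natDegree_sub_le _ _)
        (max_le (le_trans (Polynomial.natDegree_sub_le _ _) (max_le h1 h2)) h3)
    omega
  -- root set
  have hp0 : p.eval 0 = 0 := by
    have hQ0 : (∏ i, ((0:ℂ) - ξ i)) ≠ 0 :=
      prod_ne_zero_iff.mpr fun i _ => sub_ne_zero_of_ne (Ne.symm (hξ0 i))
    exact (div_eq_zero_iff.mp hinterp0).resolve_right hQ0
  have hkey : ∀ j, (ζ + σ j) * p.eval (σ j) = σ j * ∏ i, (σ j - ξ i) := by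
    intro j
    have hQσ : (∏ i, (σ j - ξ i)) ≠ 0 :=
      prod_ne_zero_iff.mpr fun i _ => sub_ne_zero_of_ne (Ne.symm (hξσ i j))
    have hζσ : ζ + σ j ≠ 0 := by
      intro h; exact hσζ j (by linear_combination h)
    have := hinterp j
    field_simp at this
    linear_combination this
  have hf : Function.Injective (fun i : Option (Option (Fin k)) =>
      Option.elim i (-ζ) (fun o => Option.elim o 0 σ)) := by
    rintro (_|_|i) (_|_|j) h
    all_goals simp only [Option.elim] at h
    all_goals first
      | rfl
      | exact absurd (neg_eq_zero.mp h) hζ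
      | exact absurd (neg_eq_zero.mp h.symm) hζ
      | exact absurd h.symm (hσζ _)
      | exact absurd h (hσζ _)
      | exact absurd h.symm (hσ0 _)
      | exact absurd h (hσ0 _)
      | exact congrArg _ (congrArg _ (hσ h))
  have hGzero : G = 0 := by
    apply Polynomial.eq_zero_of_natDegree_lt_card_of_eval_eq_zero G hf
    · rintro (_|_|j)
      · -- eval at -ζ
        simp only [hG, hq, hs, Polynomial.eval_sub, Polynomial.eval_mul, Polynomial.eval_add,
          Polynomial.eval_X, Polynomial.eval_C, Polynomial.eval_prod, Option.elim]
        have hcs : c * ∏ j, (-ζ - σ j) = ∏ j, (-ζ - ξ j) := div_mul_cancel₀ _ hSζ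
        linear_combination ζ * hcs
      · -- eval at 0
        simp [hG, hq, hs, hp0, Polynomial.eval_prod]
      · -- eval at σ j
        have hSσ : (∏ i, (σ j - σ i)) = 0 :=
          Finset.prod_eq_zero (mem_univ j) (by simp)
        simp only [hG, hq, hs, Polynomial.eval_sub, Polynomial.eval_mul, Polynomial.eval_add,
          Polynomial.eval_X, Polynomial.eval_C, Polynomial.eval_prod, Option.elim]
        simp only [hSσ]
        linear_combination -(hkey j)
    · simp
      omega
  have heval : ∀ x : ℂ, x * (∏ i, (x - ξ i)) - (ζ + x) * p.eval x
      - c * (x * ∏ i, (x - σ i)) = 0 := by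
    intro x
    have := congrArg (Polynomial.eval x) hGzero
    simpa [hG, hq, hs, Polynomial.eval_prod] using this
  intro l hlξ hlζ
  have hQl : (∏ i, (l - ξ i)) ≠ 0 :=
    prod_ne_zero_iff.mpr fun i _ => sub_ne_zero_of_ne (hlξ i)
  have hζl : ζ + l ≠ 0 := by
    intro h; exact hlζ (by linear_combination h)
  rw [Finset.prod_div_distrib, Finset.prod_div_distrib]
  have h := heval l
  have key : l * (∏ i, (l - ξ i)) - (ζ + l) * p.eval l
      = l * (∏ i, (l - σ i)) * (∏ j, (-ζ - ξ j)) / (∏ j, (-ζ - σ j)) := by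
    rw [eq_div_iff hSζ]
    have hcs : c * ∏ j, (-ζ - σ j) = ∏ j, (-ζ - ξ j) := div_mul_cancel₀ _ hSζ
    linear_combination (∏ j, (-ζ - σ j)) * h + l * (∏ i, (l - σ i)) * hcs
  rw [div_sub_div _ _ hζl hQl, key]
  field_simp
end

section
/- Let α ∈ (0,1], s ∈ (0,1], t > 0, λ_min > 0, and c_α > 0. If g : iℝ → ℝ satisfies |g(ζ)| ≤ c_α/(1 + t^α |ζ|^s) for all ζ ∈ iℝ, then ∫_{iℝ} |g(ζ)/(ζ+λ_min)| |dζ| ≤ 2c_α (λ_min^{-1} + s^{-1} ln(1 + t^{-α})). -/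
open MeasureTheory Real Set Filter Topology

private lemma tail_deriv {a s : ℝ} (ha : 0 < a) (hs : 0 < s) {y : ℝ} (hy : 0 < y) :
    HasDerivAt (fun y : ℝ => -(s⁻¹) * Real.log (1 + a⁻¹ * y ^ (-s)))
      (1 / (y * (1 + a * y ^ s))) y := by
  have h1 : HasDerivAt (fun y : ℝ => y ^ (-s)) ((-s) * y ^ (-s - 1)) y :=
    Real.hasDerivAt_rpow_const (Or.inl hy.ne')
  have h2 : HasDerivAt (fun y : ℝ => 1 + a⁻¹ * y ^ (-s)) (a⁻¹ * ((-s) * y ^ (-s - 1))) y :=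
    (h1.const_mul _).const_add 1
  have hpos : 0 < 1 + a⁻¹ * y ^ (-s) := by positivity
  have h3 := (h2.log hpos.ne').const_mul (-(s⁻¹))
  refine h3.congr_deriv ?_
  symm
  have hys : (0 : ℝ) < y ^ s := Real.rpow_pos_of_pos hy s
  rw [Real.rpow_neg hy.le, show -s - 1 = -(s + 1) by ring, Real.rpow_neg hy.le,
    Real.rpow_add hy s 1, Real.rpow_one]
  field_simp
  ring

private lemma tail_integrable {a s : ℝ} (ha : 0 < a) (hs : 0 < s) :
    IntegrableOn (fun y : ℝ => 1 / (y * (1 + a * y ^ s))) (Ioi 1) := by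
  have hc : ContinuousOn (fun y : ℝ => 1 / (y * (1 + a * y ^ s))) (Ioi 1) := by
    intro y hy
    have hy0 : (0 : ℝ) < y := lt_trans one_pos hy
    have hys : (0 : ℝ) < y ^ s := Real.rpow_pos_of_pos hy0 s
    apply ContinuousAt.continuousWithinAt
    have hr : ContinuousAt (fun y : ℝ => y ^ s) y :=
      Real.continuousAt_rpow_const y s (Or.inl hy0.ne')
    exact continuousAt_const.div (continuousAt_id.mul ((hr.const_mul a).const_add 1))
      (by positivity)
  apply Integrable.mono'
    ((integrableOn_Ioi_rpow_of_lt (show -(1 + s) < -1 by linarith) one_pos).const_mul a⁻¹)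
    (hc.aestronglyMeasurable measurableSet_Ioi)
  filter_upwards [ae_restrict_mem measurableSet_Ioi] with y hy
  have hy0 : (0 : ℝ) < y := lt_trans one_pos hy
  have hys : (0 : ℝ) < y ^ s := Real.rpow_pos_of_pos hy0 s
  rw [Real.norm_eq_abs, abs_of_nonneg (by positivity)]
  have hle : a * y ^ (1 + s) ≤ y * (1 + a * y ^ s) := by
    rw [Real.rpow_add hy0, Real.rpow_one]; nlinarith
  calc 1 / (y * (1 + a * y ^ s)) ≤ 1 / (a * y ^ (1 + s)) :=
        one_div_le_one_div_of_le (by positivity) hle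
    _ = a⁻¹ * y ^ (-(1 + s)) := by
        rw [Real.rpow_neg hy0.le]; field_simp

private lemma tail_integral {a s : ℝ} (ha : 0 < a) (hs : 0 < s) :
    ∫ y in Ioi (1 : ℝ), 1 / (y * (1 + a * y ^ s)) = s⁻¹ * Real.log (1 + a⁻¹) := by
  have hF : Tendsto (fun y : ℝ => -(s⁻¹) * Real.log (1 + a⁻¹ * y ^ (-s))) atTop (𝓝 0) := by
    have h1 : Tendsto (fun y : ℝ => 1 + a⁻¹ * y ^ (-s)) atTop (𝓝 (1 + a⁻¹ * 0)) :=
      (((tendsto_rpow_neg_atTop hs).const_mul a⁻¹).const_add 1)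
    have h2 := (h1.log (by norm_num)).const_mul (-(s⁻¹))
    simpa using h2
  have := integral_Ioi_of_hasDerivAt_of_tendsto
    (f := fun y : ℝ => -(s⁻¹) * Real.log (1 + a⁻¹ * y ^ (-s)))
    (f' := fun y : ℝ => 1 / (y * (1 + a * y ^ s)))
    ((tail_deriv ha hs one_pos).continuousAt.continuousWithinAt)
    (fun x hx => tail_deriv ha hs (lt_trans one_pos hx))
    (tail_integrable ha hs) hF
  rw [this]
  simp [Real.one_rpow]

private lemma integrableOn_Iio_neg {f : ℝ → ℝ} {c : ℝ}
    (h : IntegrableOn (fun x => f (-x)) (Ioi c)) : IntegrableOn f (Iio (-c)) := by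
  have A : MeasurableEmbedding (fun x : ℝ => -x) :=
    (Homeomorph.neg ℝ).isClosedEmbedding.measurableEmbedding
  have hpre : (fun x : ℝ => -x) ⁻¹' (Iio (-c)) = Ioi c := by
    ext x; simp [lt_neg]
  have hmap : (volume : Measure ℝ).restrict (Iio (-c)) =
      Measure.map (fun x : ℝ => -x) ((volume : Measure ℝ).restrict (Ioi c)) := by
    conv_lhs => rw [← Measure.map_neg_eq_self (volume : Measure ℝ)]
    rw [Measure.restrict_map A.measurable measurableSet_Iio, hpre]
  rw [IntegrableOn, hmap, A.integrable_map_iff]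
  exact h

/-- If `g` on the imaginary axis satisfies `|g(iy)| ≤ c_α/(1 + t^α |y|^s)`, then
`∫_{iℝ} |g(ζ)/(ζ+λ_min)| |dζ| ≤ 2 c_α (λ_min⁻¹ + s⁻¹ ln(1+t^{-α}))`. -/
theorem imaginary_axis_integral_bound (α s t lmin cα : ℝ)
    (hα0 : 0 < α) (hα1 : α ≤ 1) (hs0 : 0 < s) (hs1 : s ≤ 1)
    (ht : 0 < t) (hlmin : 0 < lmin) (hcα : 0 < cα)
    (g : ℝ → ℂ)
    (hg : ∀ y : ℝ, ‖g y‖ ≤ cα / (1 + t ^ α * |y| ^ s)) :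
    (∫ y : ℝ, ‖g y / ((y : ℂ) * Complex.I + (lmin : ℂ))‖) ≤
      2 * cα * (lmin⁻¹ + s⁻¹ * Real.log (1 + t ^ (-α))) := by
  set a := t ^ α with ha_def
  have ha : 0 < a := Real.rpow_pos_of_pos ht α
  have hta : t ^ (-α) = a⁻¹ := Real.rpow_neg ht.le α
  set tailf : ℝ → ℝ := fun y => cα * (1 / (|y| * (1 + a * |y| ^ s))) with htailf
  set S : Set ℝ := {y : ℝ | 1 < |y|} with hS_def
  have hSeq : S = Iio (-1) ∪ Ioi 1 := by
    ext y; simp [hS_def, lt_abs, or_comm, lt_neg]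
  have hSmeas : MeasurableSet S := by rw [hSeq]; exact measurableSet_Iio.union measurableSet_Ioi
  set h : ℝ → ℝ := fun y =>
    indicator (Icc (-1 : ℝ) 1) (fun _ => cα / lmin) y + indicator S tailf y with hh
  -- pointwise bound
  have hb : ∀ y : ℝ, ‖g y / ((y : ℂ) * Complex.I + (lmin : ℂ))‖ ≤ h y := by
    intro y
    have hz1 : |y| ≤ ‖(y : ℂ) * Complex.I + (lmin : ℂ)‖ := by
      have := Complex.abs_im_le_norm ((y : ℂ) * Complex.I + (lmin : ℂ))
      simpa using this
    have hz2 : lmin ≤ ‖(y : ℂ) * Complex.I + (lmin : ℂ)‖ := by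
      have := Complex.abs_re_le_norm ((y : ℂ) * Complex.I + (lmin : ℂ))
      simpa [abs_of_pos hlmin] using this
    have hden : 0 < 1 + a * |y| ^ s := by positivity
    rw [norm_div]
    by_cases hy : |y| ≤ 1
    · have h1 : h y = cα / lmin := by
        have hmem : y ∈ Icc (-1 : ℝ) 1 := by
          rcases abs_le.mp hy with ⟨h1, h2⟩; exact ⟨h1, h2⟩
        have hnot : y ∉ S := by simp [hS_def, not_lt.mpr hy]
        simp [hh, indicator_of_mem hmem, indicator_of_notMem hnot]
      rw [h1]
      have hgle : ‖g y‖ ≤ cα := (hg y).trans (by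
        apply div_le_self hcα.le
        nlinarith [Real.rpow_nonneg (abs_nonneg y) s])
      exact div_le_div₀ hcα.le hgle hlmin hz2
    · push_neg at hy
      have hmem : y ∈ S := hy
      have hnot : y ∉ Icc (-1 : ℝ) 1 := by
        intro hmem'
        exact absurd (abs_le.mpr ⟨hmem'.1, hmem'.2⟩) (not_le.mpr hy)
      have h1 : h y = tailf y := by
        simp [hh, indicator_of_mem hmem, indicator_of_notMem hnot]
      rw [h1, htailf]
      have hy0 : (0 : ℝ) < |y| := lt_trans one_pos hy
      calc ‖g y‖ / ‖(y : ℂ) * Complex.I + (lmin : ℂ)‖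
          ≤ (cα / (1 + a * |y| ^ s)) / |y| := div_le_div₀ (by positivity) (hg y) hy0 hz1
        _ = cα * (1 / (|y| * (1 + a * |y| ^ s))) := by
            rw [div_div, mul_one_div, mul_comm (1 + a * |y| ^ s) |y|]
  -- integrability pieces
  have hint1 : Integrable (indicator (Icc (-1 : ℝ) 1) (fun _ => cα / lmin)) := by
    rw [integrable_indicator_iff measurableSet_Icc]
    exact integrableOn_const measure_Icc_lt_top.ne
  have htail_pos : IntegrableOn tailf (Ioi 1) := by
    refine MeasureTheory.IntegrableOn.congr_fun
      ((tail_integrable ha hs0).const_mul cα) ?_ measurableSet_Ioi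
    intro y hy
    simp [htailf, abs_of_pos (lt_trans one_pos (mem_Ioi.mp hy))]
  have htail_even : ∀ y : ℝ, tailf (-y) = tailf y := by
    intro y; simp [htailf]
  have htail_neg : IntegrableOn tailf (Iio (-1)) := by
    apply integrableOn_Iio_neg
    simpa only [htail_even] using htail_pos
  have hintS : IntegrableOn tailf S := by
    rw [hSeq]; exact htail_neg.union htail_pos
  have hint2 : Integrable (indicator S tailf) := by
    rw [integrable_indicator_iff hSmeas]; exact hintS
  have hinth : Integrable h := hint1.add hint2
  -- compute the integral of h
  have hI1 : ∫ y : ℝ, indicator (Icc (-1 : ℝ) 1) (fun _ => cα / lmin) y = 2 * (cα / lmin) := by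
    rw [integral_indicator measurableSet_Icc, setIntegral_const, measureReal_def, Real.volume_Icc,
      show (1 : ℝ) - (-1) = 2 by norm_num,
      ENNReal.toReal_ofReal (by norm_num : (0 : ℝ) ≤ 2), smul_eq_mul]
  have hIpos : ∫ y in Ioi (1 : ℝ), tailf y = cα * (s⁻¹ * Real.log (1 + a⁻¹)) := by
    rw [setIntegral_congr_fun measurableSet_Ioi
      (g := fun y : ℝ => cα * (1 / (y * (1 + a * y ^ s))))
      (by intro y hy; simp [htailf, abs_of_pos (lt_trans one_pos (mem_Ioi.mp hy))])]
    rw [integral_const_mul, tail_integral ha hs0]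
  have hIneg : ∫ y in Iio (-1 : ℝ), tailf y = cα * (s⁻¹ * Real.log (1 + a⁻¹)) := by
    have e1 : ∫ y in Iio (-1 : ℝ), tailf y = ∫ y in Iic (-1 : ℝ), tailf y :=
      setIntegral_congr_set (Iio_ae_eq_Iic)
    rw [e1, ← integral_comp_neg_Ioi]
    simp only [htail_even]
    exact hIpos
  have hI2 : ∫ y : ℝ, indicator S tailf y = 2 * (cα * (s⁻¹ * Real.log (1 + a⁻¹))) := by
    rw [integral_indicator hSmeas, hSeq,
      setIntegral_union (Set.disjoint_left.mpr fun y hy1 hy2 => by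
        simp only [mem_Iio] at hy1; simp only [mem_Ioi] at hy2; linarith)
        measurableSet_Ioi htail_neg htail_pos, hIneg, hIpos]
    ring
  have hIh : ∫ y : ℝ, h y = 2 * cα * (lmin⁻¹ + s⁻¹ * Real.log (1 + a⁻¹)) := by
    rw [hh]
    rw [integral_add hint1 hint2, hI1, hI2]
    field_simp
  calc (∫ y : ℝ, ‖g y / ((y : ℂ) * Complex.I + (lmin : ℂ))‖)
      ≤ ∫ y : ℝ, h y := by
        apply integral_mono_of_nonneg
        · filter_upwards with y; positivity
        · exact hinth
        · filter_upwards with y; exact hb y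
    _ = 2 * cα * (lmin⁻¹ + s⁻¹ * Real.log (1 + t ^ (-α))) := by rw [hIh, hta]
end
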